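/- Let H be the simple graph on vertex set {0,1,2} × {0,1,2} in which (u,v) and (x,y) are adjacent if and only if u ≠ x and v ≠ y. Then H has at least 6 distinct 2-dominating independent sets; in particular, m(2,6) ≤ 9. -/

import Mathlib

open SimpleGraph

/-- `D` is a `k`-dominating independent set of `G`: `D` is independent and every vertex
outside `D` has at least `k` neighbours in `D`. -/
def IsKDIS {V : Type*} [Fintype V] (G : SimpleGraph V) (k : ℕ) (D : Finset V) : Prop :=
  (∀ x ∈ D, ∀ y ∈ D, ¬ G.Adj x y) ∧
  ∀ v : V, v ∉ D → k ≤ (G.neighborSet v ∩ (D : Set V)).ncard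

/-- The number of `k`-dominating independent sets of `G`. -/
noncomputable def numKDIS {V : Type*} [Fintype V] (G : SimpleGraph V) (k : ℕ) : ℕ :=
  Nat.card {D : Finset V // IsKDIS G k D}

/-- `mi k n`: the maximum number of `k`-dominating independent sets in a simple graph
on `n` vertices. -/
noncomputable def mi (k n : ℕ) : ℕ :=
  sSup {m : ℕ | ∃ G : SimpleGraph (Fin n), numKDIS G k = m}

/-- `mDIS k t`: the smallest `n` such that some simple graph on `n` vertices has at least
`t` `k`-dominating independent sets. -/
noncomputable def mDIS (k t : ℕ) : ℕ :=
  sInf {n : ℕ | ∃ G : SimpleGraph (Fin n), t ≤ numKDIS G k}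

/-- The graph `K_3 × K_3` on `Fin 3 × Fin 3`: `(u,v)` and `(x,y)` adjacent iff
`u ≠ x` and `v ≠ y`. -/
def K3timesK3 : SimpleGraph (Fin 3 × Fin 3) where
  Adj p q := p.1 ≠ q.1 ∧ p.2 ≠ q.2
  symm := by
    constructor
    intro p q h
    exact ⟨h.1.symm, h.2.symm⟩
  loopless := by
    constructor
    intro p h
    exact h.1 rfl

instance : DecidableRel K3timesK3.Adj :=
  fun p q => inferInstanceAs (Decidable (p.1 ≠ q.1 ∧ p.2 ≠ q.2))

lemma isKDIS_iff {V : Type*} [Fintype V] [DecidableEq V] (G : SimpleGraph V)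
    [DecidableRel G.Adj] (k : ℕ) (D : Finset V) :
    IsKDIS G k D ↔ ((∀ x ∈ D, ∀ y ∈ D, ¬ G.Adj x y) ∧
      ∀ v : V, v ∉ D → k ≤ (Finset.univ.filter fun u => G.Adj v u ∧ u ∈ D).card) := by
  unfold IsKDIS
  have h : ∀ v : V, (G.neighborSet v ∩ (D : Set V)).ncard
      = (Finset.univ.filter fun u => G.Adj v u ∧ u ∈ D).card := by
    intro v
    have : G.neighborSet v ∩ (D : Set V)
        = ↑(Finset.univ.filter fun u => G.Adj v u ∧ u ∈ D) := by
      ext u; simp [SimpleGraph.mem_neighborSet]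
    rw [this, Set.ncard_coe_finset]
  simp only [h]

def sixDIS : Fin 6 → Finset (Fin 3 × Fin 3)
  | 0 => {(0,0),(0,1),(0,2)}
  | 1 => {(1,0),(1,1),(1,2)}
  | 2 => {(2,0),(2,1),(2,2)}
  | 3 => {(0,0),(1,0),(2,0)}
  | 4 => {(0,1),(1,1),(2,1)}
  | 5 => {(0,2),(1,2),(2,2)}

lemma sixDIS_isKDIS : ∀ i, IsKDIS K3timesK3 2 (sixDIS i) := by
  intro i
  rw [isKDIS_iff]
  fin_cases i <;> decide

lemma sixDIS_inj : Function.Injective sixDIS := by decide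

def e9 : Fin 9 → Fin 3 × Fin 3 := fun n => (⟨n.val / 3, by omega⟩, ⟨n.val % 3, by omega⟩)

def G9 : SimpleGraph (Fin 9) := K3timesK3.comap e9

instance : DecidableRel G9.Adj :=
  fun p q => inferInstanceAs (Decidable ((e9 p).1 ≠ (e9 q).1 ∧ (e9 p).2 ≠ (e9 q).2))

def sixDIS9 : Fin 6 → Finset (Fin 9)
  | 0 => {0,1,2}
  | 1 => {3,4,5}
  | 2 => {6,7,8}
  | 3 => {0,3,6}
  | 4 => {1,4,7}
  | 5 => {2,5,8}

lemma sixDIS9_isKDIS : ∀ i, IsKDIS G9 2 (sixDIS9 i) := by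
  intro i
  rw [isKDIS_iff]
  fin_cases i <;> decide

lemma sixDIS9_inj : Function.Injective sixDIS9 := by decide

lemma six_le_card {V : Type*} [Fintype V] [DecidableEq V] (G : SimpleGraph V)
    (f : Fin 6 → Finset V) (hf : Function.Injective f)
    (h : ∀ i, IsKDIS G 2 (f i)) : 6 ≤ numKDIS G 2 := by
  have : Nat.card (Fin 6) ≤ Nat.card {D : Finset V // IsKDIS G 2 D} := by
    apply Nat.card_le_card_of_injective (fun i => ⟨f i, h i⟩)
    intro a b hab
    exact hf (congrArg Subtype.val hab)
  simpa [numKDIS] using this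

theorem K3timesK3_six_2DIS : 6 ≤ numKDIS K3timesK3 2 ∧ mDIS 2 6 ≤ 9 := by
  constructor
  · exact six_le_card _ sixDIS sixDIS_inj sixDIS_isKDIS
  · apply Nat.sInf_le
    exact ⟨G9, six_le_card _ sixDIS9 sixDIS9_inj sixDIS9_isKDIS⟩
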